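/- arXiv:1903.04205 — 4 statements merged into one kernel-verified Lean document; each statement's English description precedes it below -/
import Mathlib

section
/- In the setting where an α-strong validator votes constantly with deposit α·D_0 and the remaining (1−α)·D_0 validators never vote, finalisation resumes at the first epoch k for which the voting validator's deposit is at least 2/3 of the total deposit; this holds if and only if ∏_{i=0}^{k−1}(1+ρ_i) ≥ 2(1−α)/α. -/
/-- Finalisation resumes at epoch `k` (voting validator holds ≥ 2/3 of
the total deposit) iff `∏_{i<k}(1+ρ_i) ≥ 2(1−α)/α`. -/
theorem stmt5 (α D0 : ℝ) (ρ : ℕ → ℝ)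
    (hα : α ∈ Set.Ioo (0:ℝ) (2/3)) (hD0 : 0 < D0)
    (hρ : ∀ i, 0 < ρ i) (k : ℕ) :
    (2/3) * (α * D0 + (1 - α) * D0 * (∏ i ∈ Finset.range k, (1 + ρ i))⁻¹) ≤ α * D0 ↔
      2 * (1 - α) / α ≤ ∏ i ∈ Finset.range k, (1 + ρ i) := by
  obtain ⟨hα0, hα1⟩ := hα
  have hP : 0 < ∏ i ∈ Finset.range k, (1 + ρ i) :=
    Finset.prod_pos fun i _ => by linarith [hρ i]
  rw [div_le_iff₀ hα0, ← sub_nonneg, ← sub_nonneg (b := 2 * (1 - α))]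
  have h : α * D0 - 2/3 * (α * D0 + (1 - α) * D0 * (∏ i ∈ Finset.range k, (1 + ρ i))⁻¹)
      = (D0 / 3 / (∏ i ∈ Finset.range k, (1 + ρ i))) *
        ((∏ i ∈ Finset.range k, (1 + ρ i)) * α - 2 * (1 - α)) := by
    field_simp
    ring
  rw [h]
  constructor
  · intro hle
    by_contra hlt
    push_neg at hlt
    nlinarith [div_pos (div_pos hD0 (by norm_num : (0:ℝ) < 3)) hP]
  · intro hle
    positivity
end

section
/- Consider the worst-case delay scenario: at each epoch i the honest voting fraction is α_i, and the adversary votes with fraction δ_i = (2/3 − α_i)/(1 − α_i) of its remaining validators (the maximum δ so that total voting weight marginally fails the 2/3 threshold), whenever α_i ≤ 2/3. If the honest deposit stays constant and the non-voting adversarial deposit shrinks by factor (1+ρ_i)^{−1} with ρ_i → ∞, then the limit α of the increasing sequence α_i satisfies α > 2/3; hence finalisation resumes after finitely many epochs. -/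
/-- Worst-case delay scenario: honest deposit constant at `α0·D0`, the
adversary votes with fraction `δ_i = (2/3 − α_i)/(1 − α_i)` and its non-voting part
shrinks by `(1+ρ_i)⁻¹` with `ρ_i` increasing and unbounded; then the honest fraction
eventually exceeds `2/3`, so finalisation resumes after finitely many epochs. -/
theorem stmt6 (α0 D0 : ℝ) (ρ Dm a : ℕ → ℝ)
    (hα0 : α0 ∈ Set.Ioc (0:ℝ) (2/3)) (hD0 : 0 < D0)
    (hρpos : ∀ i, 0 < ρ i) (hρmono : Monotone ρ)
    (hρtop : Filter.Tendsto ρ Filter.atTop Filter.atTop)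
    (hDm0 : Dm 0 = (1 - α0) * D0)
    (ha : ∀ i, a i = α0 * D0 / (α0 * D0 + Dm i))
    (hrec : ∀ i, Dm (i+1) =
      ((2/3 - a i) / (1 - a i)
        + (1 - (2/3 - a i) / (1 - a i)) * (1 + ρ i)⁻¹) * Dm i) :
    ∃ T : ℕ, 2/3 < a T := by
  obtain ⟨hα0pos, hα0le⟩ := hα0
  by_contra hcon
  push_neg at hcon
  set c : ℝ := α0 * D0 with hc
  have hcpos : 0 < c := mul_pos hα0pos hD0
  have hα0lt1 : α0 < 1 := lt_of_le_of_lt hα0le (by norm_num)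
  -- basic invariant: Dm positive and ≤ Dm 0
  have hinv : ∀ i, 0 < Dm i ∧ Dm i ≤ Dm 0 := by
    intro i
    induction i with
    | zero => exact ⟨by rw [hDm0]; exact mul_pos (by linarith) hD0, le_refl _⟩
    | succ i ih =>
      obtain ⟨hpos, hle⟩ := ih
      have hsum : 0 < c + Dm i := by linarith
      have hai : a i = c / (c + Dm i) := ha i
      have haipos : 0 < a i := by rw [hai]; positivity
      have hailt1 : a i < 1 := by
        rw [hai, div_lt_one hsum]; linarith
      have hδnn : 0 ≤ (2/3 - a i) / (1 - a i) := by
        apply div_nonneg (by linarith [hcon i]) (by linarith)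
      have hδlt1 : (2/3 - a i) / (1 - a i) < 1 := by
        rw [div_lt_one (by linarith)]; linarith
      have htpos : 0 < (1 + ρ i)⁻¹ := by
        have := hρpos i; positivity
      have htle1 : (1 + ρ i)⁻¹ ≤ 1 := by
        rw [inv_le_one_iff₀]; right; linarith [hρpos i]
      have hfpos : 0 < (2/3 - a i) / (1 - a i)
          + (1 - (2/3 - a i) / (1 - a i)) * (1 + ρ i)⁻¹ := by
        have : 0 < (1 - (2/3 - a i) / (1 - a i)) * (1 + ρ i)⁻¹ :=
          mul_pos (by linarith) htpos
        linarith
      have hfle1 : (2/3 - a i) / (1 - a i)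
          + (1 - (2/3 - a i) / (1 - a i)) * (1 + ρ i)⁻¹ ≤ 1 := by
        nlinarith [mul_le_mul_of_nonneg_left htle1 (le_of_lt (by linarith :
          (0:ℝ) < 1 - (2/3 - a i) / (1 - a i)))]
      constructor
      · rw [hrec i]; exact mul_pos hfpos hpos
      · rw [hrec i]
        calc _ ≤ 1 * Dm i := mul_le_mul_of_nonneg_right hfle1 hpos.le
        _ = Dm i := one_mul _
        _ ≤ Dm 0 := hle
  -- Dm i ≥ c/2 for all i (from a i ≤ 2/3)
  have hDmlb : ∀ i, c / 2 ≤ Dm i := by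
    intro i
    have hpos := (hinv i).1
    have hsum : 0 < c + Dm i := by linarith
    have := hcon i
    rw [ha i, div_le_iff₀ hsum] at this
    linarith
  -- a i ≥ α0
  have halb : ∀ i, α0 ≤ a i := by
    intro i
    have hpos := (hinv i).1
    have hle := (hinv i).2
    have hsum : 0 < c + Dm i := by linarith
    rw [ha i, le_div_iff₀ hsum]
    rw [hDm0] at hle
    nlinarith
  -- δ bound
  set ε : ℝ := (1/3) / (1 - α0) with hε
  have hεpos : 0 < ε := by apply div_pos (by norm_num) (by linarith)
  have hεle1 : ε ≤ 1 := by
    rw [hε, div_le_one (by linarith)]; linarith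
  have hδbar : ∀ i, (2/3 - a i) / (1 - a i) ≤ 1 - ε := by
    intro i
    have hpos := (hinv i).1
    have hsum : 0 < c + Dm i := by linarith
    have hailt1 : a i < 1 := by
      rw [ha i, div_lt_one hsum]; linarith
    have h1 : 1 - ε = (2/3 - α0) / (1 - α0) := by
      have hne : (1:ℝ) - α0 ≠ 0 := by linarith
      rw [hε]
      field_simp
      ring
    rw [h1, div_le_div_iff₀ (by linarith) (by linarith)]
    have := halb i
    nlinarith
  -- find N with ρ N ≥ 1
  obtain ⟨N, hN⟩ := (Filter.tendsto_atTop.mp hρtop 1).exists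
  set r : ℝ := 1 - ε / 2 with hr
  have hrnn : 0 ≤ r := by rw [hr]; linarith
  have hrlt1 : r < 1 := by rw [hr]; linarith
  -- contraction for i ≥ N
  have hstep : ∀ i, N ≤ i → Dm (i + 1) ≤ r * Dm i := by
    intro i hi
    have hρi : 1 ≤ ρ i := le_trans hN (hρmono hi)
    have htle : (1 + ρ i)⁻¹ ≤ 1/2 := by
      rw [inv_le_comm₀ (by linarith) (by norm_num)]
      norm_num; linarith
    have htpos : 0 < (1 + ρ i)⁻¹ := by positivity
    have hpos := (hinv i).1
    have hsum : 0 < c + Dm i := by linarith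
    have haipos : 0 < a i := by rw [ha i]; positivity
    have hailt1 : a i < 1 := by rw [ha i, div_lt_one hsum]; linarith
    have hδnn : 0 ≤ (2/3 - a i) / (1 - a i) :=
      div_nonneg (by linarith [hcon i]) (by linarith)
    have hδb := hδbar i
    have hf : (2/3 - a i) / (1 - a i)
        + (1 - (2/3 - a i) / (1 - a i)) * (1 + ρ i)⁻¹ ≤ r := by
      nlinarith
    rw [hrec i]
    exact mul_le_mul_of_nonneg_right hf hpos.le
  have hgeo : ∀ k, Dm (N + k) ≤ r ^ k * Dm N := by
    intro k
    induction k with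
    | zero => simp
    | succ k ih =>
      have := hstep (N + k) (Nat.le_add_right N k)
      calc Dm (N + (k+1)) = Dm (N + k + 1) := by ring_nf
        _ ≤ r * Dm (N + k) := this
        _ ≤ r * (r ^ k * Dm N) := mul_le_mul_of_nonneg_left ih hrnn
        _ = r ^ (k+1) * Dm N := by ring
  -- choose k with r^k * Dm N < c/2
  have hDmNpos := (hinv N).1
  obtain ⟨k, hk⟩ := exists_pow_lt_of_lt_one
    (show 0 < (c/2) / Dm N by positivity) hrlt1
  have : Dm (N + k) < c / 2 := by
    calc Dm (N + k) ≤ r ^ k * Dm N := hgeo k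
      _ < ((c/2) / Dm N) * Dm N := by
          exact mul_lt_mul_of_pos_right hk hDmNpos
      _ = c / 2 := by field_simp
  exact absurd (hDmlb (N + k)) (not_le.mpr this)
end

section
/- Under always-justification, if validator ν with stake fraction α abstains from voting, ν's loss factor is ρ/(1+ρ)·(1 + (1/2)(μρ + α)), which strictly exceeds the loss (1/2)αρ of each other voting validator and the loss ρ/(1+ρ)·(α/2) of each non-voting validator, for all ρ > 0, α ∈ (0,1), μ ∈ (0,1]. -/
/-- Under always-justification, the loss factor of an abstaining
validator `ν`, namely `ρ/(1+ρ)·(1 + (1/2)(μρ + α))`, strictly exceeds both the loss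
`(1/2)αρ` of each voting validator and the loss `ρ/(1+ρ)·(α/2)` of each non-voting
validator. -/
theorem stmt13 (ρ α μ : ℝ) (hρ : 0 < ρ)
    (hα : α ∈ Set.Ioo (0:ℝ) 1) (hμ : μ ∈ Set.Ioc (0:ℝ) 1) (hαμ : α ≤ μ) :
    (1/2) * α * ρ < ρ / (1 + ρ) * (1 + (1/2) * (μ * ρ + α)) ∧
    ρ / (1 + ρ) * (α / 2) < ρ / (1 + ρ) * (1 + (1/2) * (μ * ρ + α)) := by
  obtain ⟨hα0, hα1⟩ := hα
  obtain ⟨hμ0, hμ1⟩ := hμ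
  have h1 : (0:ℝ) < 1 + ρ := by linarith
  have hdiv : 0 < ρ / (1 + ρ) := div_pos hρ h1
  constructor
  · rw [show ρ / (1 + ρ) * (1 + (1/2) * (μ * ρ + α)) = ρ * (1 + (1/2) * (μ * ρ + α)) / (1 + ρ) from by ring, lt_div_iff₀ h1]
    nlinarith [mul_pos hρ hα0, mul_le_mul_of_nonneg_right hαμ hρ.le]
  · exact mul_lt_mul_of_pos_left (by nlinarith [mul_pos hμ0 hρ]) hdiv
end

section
/- If the total deposit evolves as D_{i+1} = α·D_0 + (1−α)·D_0·∏_{j=0}^{i}(1+ρ_j)^{−1} with ρ_j ≥ β·j, β > 0, then D_i → α·D_0 as i → ∞; in particular the voting validators' share α·D_0/D_i converges to 1. -/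
/-- If `D_i = α·D_0 + (1−α)·D_0·(∏_{j<i}(1+ρ_j))⁻¹` with `ρ_j ≥ β·j`,
`β > 0`, then `D_i → α·D_0`, and the voting validators' share `α·D_0 / D_i → 1`. -/
theorem stmt19 (α D0 β : ℝ) (ρ D : ℕ → ℝ)
    (hα : α ∈ Set.Ioo (0:ℝ) 1) (hD0 : 0 < D0) (hβ : 0 < β)
    (hρ : ∀ j : ℕ, β * j ≤ ρ j)
    (hD : ∀ i, D i = α * D0 + (1 - α) * D0 * (∏ j ∈ Finset.range i, (1 + ρ j))⁻¹) :
    Filter.Tendsto D Filter.atTop (nhds (α * D0)) ∧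
    Filter.Tendsto (fun i => α * D0 / D i) Filter.atTop (nhds 1) := by
  obtain ⟨hα0, hα1⟩ := hα
  have hone : ∀ j : ℕ, (1:ℝ) ≤ 1 + ρ j := by
    intro j
    have : (0:ℝ) ≤ β * j := by positivity
    linarith [hρ j, this]
  -- product tends to atTop
  have hprod : Filter.Tendsto (fun i => ∏ j ∈ Finset.range i, (1 + ρ j))
      Filter.atTop Filter.atTop := by
    apply Filter.tendsto_atTop_mono' _
      (Filter.eventually_atTop.2 ⟨1, fun i hi => ?_⟩)
    · have : Filter.Tendsto (fun i : ℕ => 1 + β * ((i : ℝ) - 1)) Filter.atTop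
          Filter.atTop := by
        apply Filter.tendsto_atTop_add_const_left
        apply Filter.Tendsto.const_mul_atTop hβ
        apply Filter.tendsto_atTop_add_const_right
        exact tendsto_natCast_atTop_atTop
      exact this
    · have hmem : i - 1 ∈ Finset.range i := by
        simp [Nat.sub_lt (by omega : 0 < i)]
      have hrest : (1:ℝ) ≤ ∏ j ∈ (Finset.range i).erase (i - 1), (1 + ρ j) := by
        calc (1:ℝ) = ∏ _j ∈ (Finset.range i).erase (i - 1), (1:ℝ) := by simp
          _ ≤ _ := Finset.prod_le_prod (fun j _ => zero_le_one) (fun j _ => hone j)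
      have h1 : 1 + ρ (i - 1) ≤ ∏ j ∈ Finset.range i, (1 + ρ j) := by
        rw [← Finset.mul_prod_erase _ _ hmem]
        exact le_mul_of_one_le_right (by linarith [hone (i-1)]) hrest
      have h2 : 1 + β * ((i : ℝ) - 1) ≤ 1 + ρ (i - 1) := by
        have := hρ (i - 1)
        have hcast : ((i - 1 : ℕ) : ℝ) = (i : ℝ) - 1 := by
          have : (1:ℕ) ≤ i := hi
          push_cast [Nat.cast_sub this]
          ring
        rw [hcast] at this
        linarith
      linarith
  have hinv : Filter.Tendsto (fun i => (∏ j ∈ Finset.range i, (1 + ρ j))⁻¹)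
      Filter.atTop (nhds 0) := hprod.inv_tendsto_atTop
  have hDlim : Filter.Tendsto D Filter.atTop (nhds (α * D0)) := by
    have : Filter.Tendsto
        (fun i => α * D0 + (1 - α) * D0 * (∏ j ∈ Finset.range i, (1 + ρ j))⁻¹)
        Filter.atTop (nhds (α * D0 + (1 - α) * D0 * 0)) :=
      (tendsto_const_nhds.add ((tendsto_const_nhds.mul hinv)))
    simp only [mul_zero, add_zero] at this
    exact this.congr (fun i => (hD i).symm)
  refine ⟨hDlim, ?_⟩
  have hne : α * D0 ≠ 0 := by positivity
  have := (tendsto_const_nhds (x := α * D0) (f := Filter.atTop (α := ℕ))).div hDlim hne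
  rw [div_self hne] at this
  exact this
end
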